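/- Let Ψ be a p×p positive definite diagonal matrix and S a p×p positive semidefinite matrix. Let Ψ^{-1/2} S Ψ^{-1/2} = U Λ Uᵀ be an eigenvalue decomposition with eigenvalues λ₁ ≥ ⋯ ≥ λ_p, and define B* = Ψ^{1/2} U D^{1/2} where D = Diag(d₁,…,d_r,0,…,0) with d_i = max(λ_i − 1, 0). Then B* maximizes the function B ↦ log det((BBᵀ + Ψ)^{-1}) − Tr((BBᵀ + Ψ)^{-1} S) over all p×r real matrices B. -/

import Mathlib

open Matrix Real

noncomputable def faH (x : ℝ) : ℝ := if x ≤ 1 then 0 else x - 1 - Real.log x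

lemma faH_nonneg (x : ℝ) : 0 ≤ faH x := by
  unfold faH; split
  · exact le_rfl
  · have hx : (0:ℝ) < x := by linarith [not_le.mp ‹¬ x ≤ 1›]
    have := Real.log_le_sub_one_of_pos hx
    linarith

lemma faH_of_le {x : ℝ} (h : x ≤ 1) : faH x = 0 := if_pos h

lemma faH_of_gt {x : ℝ} (h : 1 < x) : faH x = x - 1 - Real.log x := if_neg (not_le.mpr h)

lemma faH_eq_comp (x : ℝ) : faH x = (fun y : ℝ => y - 1 - Real.log y) (max x 1) := by
  rcases le_or_gt x 1 with h | h
  · simp [faH_of_le h, max_eq_right h]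
  · simp [faH_of_gt h, max_eq_left h.le]

lemma f1_mono {a b : ℝ} (ha : 1 ≤ a) (hab : a ≤ b) :
    a - 1 - Real.log a ≤ b - 1 - Real.log b := by
  have ha0 : (0:ℝ) < a := by linarith
  have hb0 : (0:ℝ) < b := by linarith
  have h1 : Real.log b - Real.log a = Real.log (b / a) := (Real.log_div hb0.ne' ha0.ne').symm
  have h2 : Real.log (b / a) ≤ b / a - 1 := Real.log_le_sub_one_of_pos (by positivity)
  have h3 : b / a - 1 ≤ b - a := by
    rw [div_sub_one ha0.ne']
    rw [div_le_iff₀ ha0]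
    nlinarith
  linarith

lemma faH_mono {a b : ℝ} (hab : a ≤ b) : faH a ≤ faH b := by
  rcases le_or_gt a 1 with h | h
  · rw [faH_of_le h]; exact faH_nonneg b
  · rw [faH_of_gt h, faH_of_gt (lt_of_lt_of_le h hab)]
    exact f1_mono h.le hab

lemma faH_convex : ConvexOn ℝ Set.univ faH := by
  have himg : (fun x : ℝ => max x 1) '' Set.univ = Set.Ici 1 := by
    ext y
    constructor
    · rintro ⟨x, -, rfl⟩; exact le_max_right x 1
    · intro hy; refine ⟨y, Set.mem_univ _, ?_⟩; exact max_eq_left hy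
  have hmax : ConvexOn ℝ Set.univ (fun x : ℝ => max x 1) := by
    have h := (convexOn_id (convex_univ (𝕜 := ℝ) (E := ℝ))).sup
      (convexOn_const (1:ℝ) (convex_univ (𝕜 := ℝ) (E := ℝ)))
    have he : (fun x : ℝ => max x 1) = (_root_.id ⊔ fun _ : ℝ => (1:ℝ)) := by
      funext x; rfl
    rw [he]; exact h
  have hf1 : ConvexOn ℝ (Set.Ici (1:ℝ)) (fun y : ℝ => y - 1 - Real.log y) := by
    have h1 : ConvexOn ℝ (Set.Ici (1:ℝ)) (fun y : ℝ => y - 1) := by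
      have h := (convexOn_id (convex_Ici (1:ℝ) : Convex ℝ (Set.Ici (1:ℝ)))).add_const (-1)
      have he : (fun y : ℝ => y - 1) = fun y : ℝ => _root_.id y + (-1) := by
        funext y; simp [sub_eq_add_neg]
      rw [he]; exact h
    have h2 : ConcaveOn ℝ (Set.Ici (1:ℝ)) Real.log :=
      (strictConcaveOn_log_Ioi.concaveOn).subset
        (fun x (hx : x ∈ Set.Ici (1:ℝ)) => Set.mem_Ioi.mpr (lt_of_lt_of_le one_pos (Set.mem_Ici.mp hx))) (convex_Ici (1:ℝ) : Convex ℝ (Set.Ici (1:ℝ)))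
    exact h1.sub h2
  have hcomp : ConvexOn ℝ Set.univ ((fun y : ℝ => y - 1 - Real.log y) ∘ (fun x : ℝ => max x 1)) := by
    refine ConvexOn.comp ?_ hmax ?_
    · rw [himg]; exact hf1
    · rw [himg]; intro a ha b hb hab; exact f1_mono ha hab
  have : faH = (fun y : ℝ => y - 1 - Real.log y) ∘ (fun x : ℝ => max x 1) := funext faH_eq_comp
  rw [this]; exact hcomp

lemma faH_scalar {w m : ℝ} (h0 : 0 ≤ w) (h1 : w < 1) :
    w * m + Real.log (1 - w) ≤ faH m := by
  have hw : (0:ℝ) < 1 - w := by linarith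
  rcases le_or_gt m 1 with hm | hm
  · rw [faH_of_le hm]
    have := Real.log_le_sub_one_of_pos hw
    nlinarith
  · rw [faH_of_gt hm]
    have hm0 : (0:ℝ) < m := by linarith
    have h2 : Real.log (m * (1 - w)) ≤ m * (1 - w) - 1 :=
      Real.log_le_sub_one_of_pos (by positivity)
    have h3 : Real.log (m * (1 - w)) = Real.log m + Real.log (1 - w) :=
      Real.log_mul hm0.ne' hw.ne'
    nlinarith

lemma fa_sum_reindex {p r : ℕ} (hr : r ≤ p) (f : Fin p → ℝ) :
    ∑ i : Fin p, (if (i : ℕ) < r then f i else 0) = ∑ j : Fin r, f (Fin.castLE hr j) := by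
  rw [← Finset.sum_filter]
  refine (Finset.sum_bij (fun (j : Fin r) (_ : j ∈ Finset.univ) => Fin.castLE hr j)
    ?_ ?_ ?_ ?_).symm
  · intro a _; simp [Fin.castLE]
  · intro a _ b _ h; exact Fin.castLE_injective hr h
  · intro b hb
    simp only [Finset.mem_filter, Finset.mem_univ, true_and] at hb
    exact ⟨⟨(b : ℕ), hb⟩, Finset.mem_univ _, by ext; simp [Fin.castLE]⟩
  · intro a _; rfl

lemma fa_sum_indicator_one {p r : ℕ} (hr : r ≤ p) :
    ∑ i : Fin p, (if (i : ℕ) < r then (1:ℝ) else 0) = r := by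
  rw [fa_sum_reindex hr (fun _ => (1:ℝ))]
  simp

lemma fa_counting {p r : ℕ} (hr : r ≤ p) (c g : Fin p → ℝ)
    (hc0 : ∀ i, 0 ≤ c i) (hc1 : ∀ i, c i ≤ 1) (hcs : ∑ i, c i ≤ r)
    (hg0 : ∀ i, 0 ≤ g i) (hgm : ∀ i j : Fin p, i ≤ j → g j ≤ g i) :
    ∑ i, c i * g i ≤ ∑ i : Fin p, (if (i : ℕ) < r then g i else 0) := by
  set τ : ℝ := if h' : r < p then g ⟨r, h'⟩ else 0 with hτ
  have hτ0 : 0 ≤ τ := by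
    rw [hτ]; split
    · exact hg0 _
    · exact le_rfl
  have key : ∀ i : Fin p, c i * g i ≤
      (if (i : ℕ) < r then g i else 0) + (c i - (if (i : ℕ) < r then (1:ℝ) else 0)) * τ := by
    intro i
    by_cases hi : (i : ℕ) < r
    · rw [if_pos hi, if_pos hi]
      have hgτ : τ ≤ g i := by
        rw [hτ]; split
        · exact hgm i ⟨r, ‹r < p›⟩ (le_of_lt hi)
        · exact hg0 i
      nlinarith [hc1 i, hc0 i]
    · rw [if_neg hi, if_neg hi]
      have hrp : r < p := lt_of_le_of_lt (not_lt.mp hi) i.isLt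
      have hgτ : g i ≤ τ := by
        rw [hτ, dif_pos hrp]
        exact hgm ⟨r, hrp⟩ i (not_lt.mp hi)
      nlinarith [hc0 i, hg0 i]
  calc ∑ i, c i * g i ≤ ∑ i : Fin p, ((if (i : ℕ) < r then g i else 0)
        + (c i - (if (i : ℕ) < r then (1:ℝ) else 0)) * τ) := Finset.sum_le_sum (fun i _ => key i)
    _ = (∑ i : Fin p, (if (i : ℕ) < r then g i else 0))
        + ((∑ i, c i) - (∑ i : Fin p, (if (i : ℕ) < r then (1:ℝ) else 0))) * τ := by
        rw [Finset.sum_add_distrib, ← Finset.sum_mul, Finset.sum_sub_distrib]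
    _ ≤ ∑ i : Fin p, (if (i : ℕ) < r then g i else 0) := by
        rw [fa_sum_indicator_one hr]
        nlinarith

variable {n : Type*} [Fintype n] [DecidableEq n]

lemma fa_conj_mul (U : Matrix n n ℝ) (hU2 : Uᵀ * U = 1) (a b : n → ℝ) :
    (U * diagonal a * Uᵀ) * (U * diagonal b * Uᵀ) = U * diagonal (fun i => a i * b i) * Uᵀ := by
  calc (U * diagonal a * Uᵀ) * (U * diagonal b * Uᵀ)
      = U * diagonal a * (Uᵀ * U) * diagonal b * Uᵀ := by simp only [Matrix.mul_assoc]
    _ = U * (diagonal a * diagonal b) * Uᵀ := by rw [hU2]; simp only [Matrix.mul_one, Matrix.mul_assoc]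
    _ = U * diagonal (fun i => a i * b i) * Uᵀ := by rw [Matrix.diagonal_mul_diagonal]

lemma fa_conj_det (U : Matrix n n ℝ) (hU1 : U * Uᵀ = 1) (a : n → ℝ) :
    (U * diagonal a * Uᵀ).det = ∏ i, a i := by
  have h : U.det * Uᵀ.det = 1 := by rw [← Matrix.det_mul, hU1, Matrix.det_one]
  rw [Matrix.det_mul, Matrix.det_mul, Matrix.det_diagonal]
  calc U.det * (∏ i, a i) * Uᵀ.det = (U.det * Uᵀ.det) * ∏ i, a i := by ring
    _ = ∏ i, a i := by rw [h, one_mul]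

lemma fa_conj_trace (U : Matrix n n ℝ) (hU2 : Uᵀ * U = 1) (a : n → ℝ) :
    (U * diagonal a * Uᵀ).trace = ∑ i, a i := by
  rw [Matrix.trace_mul_comm, ← Matrix.mul_assoc, hU2, Matrix.one_mul, Matrix.trace_diagonal]

lemma fa_conj_add_one (U : Matrix n n ℝ) (hU1 : U * Uᵀ = 1) (a : n → ℝ) :
    U * diagonal a * Uᵀ + 1 = U * diagonal (fun i => a i + 1) * Uᵀ := by
  have h1 : (1 : Matrix n n ℝ) = U * diagonal (fun _ => (1:ℝ)) * Uᵀ := by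
    rw [Matrix.diagonal_one, Matrix.mul_one, hU1]
  rw [h1]
  rw [show (fun i => a i + 1) = fun i => a i + (fun _ => (1:ℝ)) i from rfl]
  rw [← Matrix.diagonal_add]
  simp only [Matrix.mul_add, Matrix.add_mul]

lemma fa_conj_inv (U : Matrix n n ℝ) (hU1 : U * Uᵀ = 1) (hU2 : Uᵀ * U = 1)
    (a : n → ℝ) (ha : ∀ i, a i ≠ 0) :
    (U * diagonal a * Uᵀ)⁻¹ = U * diagonal (fun i => (a i)⁻¹) * Uᵀ := by
  apply Matrix.inv_eq_right_inv
  rw [fa_conj_mul U hU2]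
  have : (fun i => a i * (a i)⁻¹) = fun _ => (1:ℝ) := by
    funext i; exact mul_inv_cancel₀ (ha i)
  rw [this, Matrix.diagonal_one, Matrix.mul_one, hU1]

lemma fa_value_formula {p : ℕ} (U : Matrix (Fin p) (Fin p) ℝ)
    (hU1 : U * Uᵀ = 1) (hU2 : Uᵀ * U = 1) (lam e : Fin p → ℝ) (he : ∀ i, 0 ≤ e i) :
    Real.log ((U * diagonal e * Uᵀ + 1)⁻¹).det
      - ((U * diagonal e * Uᵀ + 1)⁻¹ * (U * diagonal lam * Uᵀ)).trace
    = ∑ i, (-(Real.log (1 + e i)) - (1 + e i)⁻¹ * lam i) := by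
  have hpos : ∀ i, (0:ℝ) < e i + 1 := fun i => by linarith [he i]
  have hne : ∀ i, e i + 1 ≠ 0 := fun i => (hpos i).ne'
  rw [fa_conj_add_one U hU1]
  rw [fa_conj_inv U hU1 hU2 _ hne]
  rw [fa_conj_mul U hU2]
  rw [fa_conj_det U hU1, fa_conj_trace U hU2]
  rw [Real.log_prod (fun i _ => inv_ne_zero (hne i))]
  rw [← Finset.sum_sub_distrib]
  congr 1
  funext i
  rw [Real.log_inv]
  rw [add_comm (e i) 1]

section
variable {p r : ℕ}

lemma fa_core_bound (hr : r ≤ p) (U : Matrix (Fin p) (Fin p) ℝ)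
    (hU1 : U * Uᵀ = 1) (hU2 : Uᵀ * U = 1) (lam : Fin p → ℝ)
    (hsort : ∀ i j : Fin p, i ≤ j → lam j ≤ lam i)
    (C : Matrix (Fin p) (Fin r) ℝ) :
    Real.log ((C * Cᵀ + 1)⁻¹).det - ((C * Cᵀ + 1)⁻¹ * (U * diagonal lam * Uᵀ)).trace
      ≤ (∑ i : Fin p, (if (i : ℕ) < r then faH (lam i) else 0)) - ∑ i, lam i := by
  classical
  -- spectral setup on G = CᵀC
  have hG : (Cᵀ * C).PosSemidef := by
    have := Matrix.posSemidef_conjTranspose_mul_self C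
    rwa [Matrix.conjTranspose_eq_transpose_of_trivial] at this
  have hGh : (Cᵀ * C).IsHermitian := hG.isHermitian
  set Q : Matrix (Fin r) (Fin r) ℝ := (hGh.eigenvectorUnitary : Matrix (Fin r) (Fin r) ℝ) with hQdef
  set γ : Fin r → ℝ := hGh.eigenvalues with hγdef
  have hγ0 : ∀ j, 0 ≤ γ j := fun j => hG.eigenvalues_nonneg j
  have hQ1 : Q * Qᵀ = 1 := by
    have := (Matrix.mem_unitaryGroup_iff).mp hGh.eigenvectorUnitary.2
    simpa [Matrix.star_eq_conjTranspose, Matrix.conjTranspose_eq_transpose_of_trivial] using this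
  have hQ2 : Qᵀ * Q = 1 := by
    rw [mul_eq_one_comm] at hQ1; exact hQ1
  have hdiagQ : Qᵀ * (Cᵀ * C) * Q = diagonal γ := by
    have := hGh.conjStarAlgAut_star_eigenvectorUnitary
    rw [Unitary.conjStarAlgAut_star_apply] at this
    simpa [Matrix.star_eq_conjTranspose, Matrix.conjTranspose_eq_transpose_of_trivial,
      Function.comp] using this
  have hspec : Cᵀ * C = Q * diagonal γ * Qᵀ := by
    rw [← hdiagQ]
    have h : Q * (Qᵀ * (Cᵀ * C) * Q) * Qᵀ = (Q * Qᵀ) * (Cᵀ * C) * (Q * Qᵀ) := by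
      simp only [Matrix.mul_assoc]
    rw [h, hQ1, Matrix.one_mul, Matrix.mul_one]
  set E : Matrix (Fin p) (Fin r) ℝ := C * Q with hEdef
  set K : Matrix (Fin p) (Fin r) ℝ := Uᵀ * E with hKdef
  have hKK : Kᵀ * K = diagonal γ := by
    have h1 : Kᵀ = Eᵀ * U := by rw [hKdef, Matrix.transpose_mul, Matrix.transpose_transpose]
    rw [h1, hKdef]
    have h2 : Eᵀ * U * (Uᵀ * E) = Eᵀ * (U * Uᵀ) * E := by simp only [Matrix.mul_assoc]
    rw [h2, hU1, Matrix.mul_one]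
    rw [hEdef, Matrix.transpose_mul]
    have h3 : Qᵀ * Cᵀ * (C * Q) = Qᵀ * (Cᵀ * C) * Q := by simp only [Matrix.mul_assoc]
    rw [h3, hdiagQ]
  have colsq : ∀ j, ∑ i, (K i j)^2 = γ j := by
    intro j
    have := congrFun (congrFun hKK j) j
    rw [Matrix.mul_apply] at this
    simp only [Matrix.transpose_apply, Matrix.diagonal_apply_eq] at this
    rw [← this]
    exact Finset.sum_congr rfl (fun i _ => (sq (K i j)).symm ▸ rfl)
  have colorth : ∀ j k, j ≠ k → ∑ i, K i j * K i k = 0 := by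
    intro j k hjk
    have := congrFun (congrFun hKK j) k
    rw [Matrix.mul_apply] at this
    simp only [Matrix.transpose_apply, Matrix.diagonal_apply_ne _ hjk] at this
    exact this
  -- explicit inverse of CCᵀ+1
  set ν : Fin r → ℝ := fun j => (γ j + 1)⁻¹ with hνdef
  have h1γ : ∀ j, (0:ℝ) < γ j + 1 := fun j => by linarith [hγ0 j]
  set P : Matrix (Fin r) (Fin r) ℝ := Q * diagonal ν * Qᵀ with hPdef
  have hG1 : Cᵀ * C + 1 = Q * diagonal (fun j => γ j + 1) * Qᵀ := by
    rw [hspec, fa_conj_add_one Q hQ1]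
  have hGP : (Cᵀ * C + 1) * P = 1 := by
    rw [hG1, hPdef, fa_conj_mul Q hQ2]
    have : (fun i => (γ i + 1) * ν i) = fun _ => (1:ℝ) := by
      funext i; exact mul_inv_cancel₀ (h1γ i).ne'
    rw [this, Matrix.diagonal_one, Matrix.mul_one, hQ1]
  have hright : (C * Cᵀ + 1) * (1 - C * P * Cᵀ) = 1 := by
    have key : C * Cᵀ * (C * P * Cᵀ) + C * P * Cᵀ = C * Cᵀ := by
      have expand : C * Cᵀ * (C * P * Cᵀ) + C * P * Cᵀ = C * ((Cᵀ * C + 1) * P) * Cᵀ := by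
        simp only [Matrix.add_mul, Matrix.mul_add, Matrix.one_mul, Matrix.mul_assoc]
      rw [expand, hGP, Matrix.mul_one]
    calc (C * Cᵀ + 1) * (1 - C * P * Cᵀ)
        = C * Cᵀ + 1 - (C * Cᵀ * (C * P * Cᵀ) + C * P * Cᵀ) := by
          simp only [Matrix.mul_sub, Matrix.mul_one, Matrix.add_mul, Matrix.one_mul]
      _ = 1 := by rw [key]; abel1
  have hInv : (C * Cᵀ + 1)⁻¹ = 1 - C * P * Cᵀ := Matrix.inv_eq_right_inv hright
  have hdet : (C * Cᵀ + 1).det = ∏ j, (γ j + 1) := by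
    rw [add_comm (C * Cᵀ) 1, Matrix.det_one_add_mul_comm, ← add_comm (Cᵀ * C) 1, hG1,
      fa_conj_det Q hQ1]
  have hdetpos : (0:ℝ) < ∏ j, (γ j + 1) := Finset.prod_pos (fun j _ => h1γ j)
  have hdetinv : ((C * Cᵀ + 1)⁻¹).det = (∏ j, (γ j + 1))⁻¹ := by
    have h0 : (C * Cᵀ + 1) * (C * Cᵀ + 1)⁻¹ = 1 := by rw [hInv]; exact hright
    have h1 : (C * Cᵀ + 1).det * ((C * Cᵀ + 1)⁻¹).det = 1 := by
      rw [← Matrix.det_mul, h0, Matrix.det_one]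
    rw [hdet] at h1
    field_simp at h1 ⊢
    linarith [h1]
  have hlogdetinv : Real.log ((C * Cᵀ + 1)⁻¹).det = - ∑ j, Real.log (γ j + 1) := by
    rw [hdetinv, Real.log_inv, Real.log_prod (fun j _ => (h1γ j).ne')]
  -- trace computation
  have htr : ((C * Cᵀ + 1)⁻¹ * (U * diagonal lam * Uᵀ)).trace
      = (∑ i, lam i) - ∑ j, ν j * (∑ i, lam i * (K i j)^2) := by
    rw [hInv, Matrix.sub_mul, Matrix.one_mul, Matrix.trace_sub, fa_conj_trace U hU2]
    congr 1
    have step1 : C * P * Cᵀ = E * diagonal ν * Eᵀ := by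
      rw [hPdef, hEdef, Matrix.transpose_mul]
      simp only [Matrix.mul_assoc]
    rw [step1]
    have hKT : Kᵀ = Eᵀ * U := by rw [hKdef, Matrix.transpose_mul, Matrix.transpose_transpose]
    have step3 : Eᵀ * (U * diagonal lam * Uᵀ) * E = Kᵀ * diagonal lam * K := by
      rw [hKT, hKdef]
      simp only [Matrix.mul_assoc]
    have step2 : (E * diagonal ν * Eᵀ * (U * diagonal lam * Uᵀ)).trace
        = (diagonal ν * (Kᵀ * diagonal lam * K)).trace := by
      rw [← step3]
      have ha : E * diagonal ν * Eᵀ * (U * diagonal lam * Uᵀ)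
          = E * (diagonal ν * (Eᵀ * (U * diagonal lam * Uᵀ))) := by
        simp only [Matrix.mul_assoc]
      rw [ha, Matrix.trace_mul_comm]
      simp only [Matrix.mul_assoc]
    rw [step2]
    have entry : ∀ j, (Kᵀ * diagonal lam * K) j j = ∑ i, lam i * (K i j)^2 := by
      intro j
      have hx : Kᵀ * diagonal lam * K = Kᵀ * (diagonal lam * K) := by
        simp only [Matrix.mul_assoc]
      rw [hx, Matrix.mul_apply]
      refine Finset.sum_congr rfl (fun i _ => ?_)
      rw [Matrix.transpose_apply, Matrix.diagonal_mul]
      ring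
    have : (diagonal ν * (Kᵀ * diagonal lam * K)).trace
        = ∑ j, ν j * ((Kᵀ * diagonal lam * K) j j) := by
      rw [Matrix.trace]
      refine Finset.sum_congr rfl (fun j _ => ?_)
      rw [Matrix.diag_apply, Matrix.diagonal_mul]
    rw [this]
    exact Finset.sum_congr rfl (fun j _ => by rw [entry j])
  -- per-column weights
  set t : Fin p → Fin r → ℝ := fun i j => if γ j = 0 then 0 else (K i j)^2 / γ j with htdef
  have ht0 : ∀ i j, 0 ≤ t i j := by
    intro i j; simp only [htdef]; split
    · exact le_rfl
    · exact div_nonneg (sq_nonneg _) (hγ0 j)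
  have hKzero : ∀ j, γ j = 0 → ∀ i, K i j = 0 := by
    intro j hj i
    have h := colsq j
    rw [hj] at h
    have hnn : ∀ x ∈ Finset.univ, (0:ℝ) ≤ (K x j)^2 := fun x _ => sq_nonneg _
    have hall := (Finset.sum_eq_zero_iff_of_nonneg hnn).mp h i (Finset.mem_univ i)
    exact (pow_eq_zero_iff two_ne_zero).mp hall
  have hrowsum : ∀ j, γ j ≠ 0 → ∑ i, t i j = 1 := by
    intro j hj
    have : ∀ i, t i j = (K i j)^2 / γ j := fun i => by simp only [htdef]; rw [if_neg hj]
    rw [Finset.sum_congr rfl (fun i _ => this i), ← Finset.sum_div, colsq, div_self hj]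
  have percol : ∀ j, ν j * (∑ i, lam i * (K i j)^2) - Real.log (γ j + 1)
      ≤ ∑ i, t i j * faH (lam i) := by
    intro j
    by_cases hγ : γ j = 0
    · have hK0 : ∀ i, K i j = 0 := hKzero j hγ
      have h1 : ∑ i, lam i * (K i j)^2 = 0 :=
        Finset.sum_eq_zero (fun i _ => by rw [hK0 i]; ring)
      have h2 : ∑ i, t i j * faH (lam i) =
          0 := Finset.sum_eq_zero (fun i _ => by simp only [htdef]; rw [if_pos hγ, zero_mul])
      rw [h1, h2, mul_zero, hγ]
      norm_num
    · have hγpos : 0 < γ j := lt_of_le_of_ne (hγ0 j) (Ne.symm hγ)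
      set w : ℝ := γ j / (γ j + 1) with hwdef
      set m : ℝ := ∑ i, t i j * lam i with hmdef
      have hw0 : 0 ≤ w := div_nonneg (hγ0 j) (h1γ j).le
      have hw1 : w < 1 := by rw [hwdef, div_lt_one (h1γ j)]; linarith
      have h1w : 1 - w = (γ j + 1)⁻¹ := by rw [hwdef]; field_simp; ring
      have hsum : ∑ i, lam i * (K i j)^2 = γ j * m := by
        rw [hmdef, Finset.mul_sum]
        refine Finset.sum_congr rfl (fun i _ => ?_)
        simp only [htdef]
        rw [if_neg hγ]
        field_simp
      have hLHS : ν j * (∑ i, lam i * (K i j)^2) - Real.log (γ j + 1)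
          = w * m + Real.log (1 - w) := by
        rw [hsum, h1w, Real.log_inv]
        have hx : ν j * (γ j * m) = w * m := by
          simp only [hνdef, hwdef]
          field_simp
        rw [hx]; ring
      rw [hLHS]
      refine le_trans (faH_scalar hw0 hw1) ?_
      have hJen := faH_convex.map_sum_le (t := Finset.univ) (w := fun i => t i j) (p := lam)
          (fun i _ => ht0 i j) (hrowsum j hγ) (fun i _ => Set.mem_univ _)
      simpa [smul_eq_mul, hmdef] using hJen
  -- Bessel-type bound on column sums of t
  have hc0 : ∀ i, 0 ≤ ∑ j, t i j := fun i => Finset.sum_nonneg (fun j _ => ht0 i j)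
  set N : Matrix (Fin p) (Fin r) ℝ :=
    Matrix.of (fun i j => if γ j = 0 then 0 else K i j / Real.sqrt (γ j)) with hNdef
  have hN : ∀ i j, N i j = if γ j = 0 then 0 else K i j / Real.sqrt (γ j) := fun i j => rfl
  have hN2 : ∀ i j, (N i j)^2 = t i j := by
    intro i j; rw [hN]; simp only [htdef]
    split
    · simp
    · rw [div_pow, Real.sq_sqrt (hγ0 j)]
  have hNN : Nᵀ * N = diagonal (fun j => if γ j = 0 then (0:ℝ) else 1) := by
    ext j k
    rw [Matrix.mul_apply]
    simp only [Matrix.transpose_apply]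
    by_cases hjk : j = k
    · subst hjk
      rw [Matrix.diagonal_apply_eq]
      by_cases hj : γ j = 0
      · rw [if_pos hj]
        exact Finset.sum_eq_zero (fun i _ => by rw [hN, if_pos hj, zero_mul])
      · rw [if_neg hj]
        have hterm : ∀ i, N i j * N i j = (K i j * K i j) / (Real.sqrt (γ j) * Real.sqrt (γ j)) := by
          intro i; rw [hN, if_neg hj, div_mul_div_comm]
        rw [Finset.sum_congr rfl (fun i _ => hterm i), ← Finset.sum_div]
        have hs : ∑ i, K i j * K i j = γ j := by
          rw [← colsq j]
          exact Finset.sum_congr rfl (fun i _ => (sq (K i j)).symm)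
        rw [hs, Real.mul_self_sqrt (hγ0 j), div_self hj]
    · rw [Matrix.diagonal_apply_ne _ hjk]
      by_cases hj : γ j = 0
      · exact Finset.sum_eq_zero (fun i _ => by rw [hN, if_pos hj, zero_mul])
      · by_cases hk : γ k = 0
        · exact Finset.sum_eq_zero (fun i _ => by rw [hN i k, if_pos hk, mul_zero])
        · have hterm : ∀ i, N i j * N i k
              = (K i j * K i k) / (Real.sqrt (γ j) * Real.sqrt (γ k)) := by
            intro i; rw [hN, hN, if_neg hj, if_neg hk, div_mul_div_comm]
          rw [Finset.sum_congr rfl (fun i _ => hterm i), ← Finset.sum_div, colorth j k hjk,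
            zero_div]
  set A : Matrix (Fin p) (Fin p) ℝ := N * Nᵀ with hAdef
  have hAii : ∀ i, A i i = ∑ j, t i j := by
    intro i
    rw [hAdef, Matrix.mul_apply]
    refine Finset.sum_congr rfl (fun j _ => ?_)
    rw [Matrix.transpose_apply, ← hN2 i j]; ring
  have hAsym : ∀ i k, A k i = A i k := by
    intro i k
    rw [hAdef, Matrix.mul_apply, Matrix.mul_apply]
    exact Finset.sum_congr rfl (fun j _ => by rw [Matrix.transpose_apply, Matrix.transpose_apply]; ring)
  have hAsq : ∀ i, (A i i)^2 ≤ (A * A) i i := by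
    intro i
    rw [Matrix.mul_apply]
    calc (A i i)^2 ≤ ∑ k, (A i k)^2 :=
          Finset.single_le_sum (f := fun k => (A i k)^2) (fun k _ => sq_nonneg _)
            (Finset.mem_univ i)
      _ = ∑ k, A i k * A k i := Finset.sum_congr rfl (fun k _ => by rw [hAsym i k]; ring)
  have hA2 : ∀ i, (A * A) i i ≤ A i i := by
    intro i
    have hmm : A * A = N * (diagonal (fun j => if γ j = 0 then (0:ℝ) else 1) * Nᵀ) := by
      rw [hAdef]
      calc N * Nᵀ * (N * Nᵀ) = N * ((Nᵀ * N) * Nᵀ) := by simp only [Matrix.mul_assoc]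
        _ = _ := by rw [hNN]
    rw [hmm, Matrix.mul_apply]
    have hAi : A i i = ∑ j, N i j * N i j := by
      rw [hAdef, Matrix.mul_apply]
      exact Finset.sum_congr rfl (fun j _ => by rw [Matrix.transpose_apply])
    rw [hAi]
    refine Finset.sum_le_sum (fun j _ => ?_)
    rw [Matrix.diagonal_mul, Matrix.transpose_apply]
    split
    · rw [zero_mul, mul_zero]; exact mul_self_nonneg _
    · rw [one_mul]
  have hc1 : ∀ i, ∑ j, t i j ≤ 1 := by
    intro i
    have h1 := hAsq i
    have h2 := hA2 i
    have h0 : 0 ≤ A i i := by rw [hAii]; exact hc0 i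
    have : A i i ≤ 1 := by nlinarith
    rw [hAii] at this; exact this
  have hcs : ∑ i, ∑ j, t i j ≤ (r:ℝ) := by
    rw [Finset.sum_comm]
    calc ∑ j : Fin r, ∑ i, t i j ≤ ∑ j : Fin r, (1:ℝ) := by
          refine Finset.sum_le_sum (fun j _ => ?_)
          by_cases hj : γ j = 0
          · rw [Finset.sum_eq_zero (fun i _ => by simp only [htdef]; rw [if_pos hj])]
            norm_num
          · rw [hrowsum j hj]
      _ = r := by simp
  -- assemble
  have hfinal : ∑ i, (∑ j, t i j) * faH (lam i)
      ≤ ∑ i : Fin p, (if (i : ℕ) < r then faH (lam i) else 0) :=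
    fa_counting hr (fun i => ∑ j, t i j) (fun i => faH (lam i)) hc0 hc1 hcs
      (fun i => faH_nonneg _) (fun i j hij => faH_mono (hsort i j hij))
  have hswap2 : ∑ j, ∑ i, t i j * faH (lam i) = ∑ i, (∑ j, t i j) * faH (lam i) := by
    rw [Finset.sum_comm]
    exact Finset.sum_congr rfl (fun i _ => (Finset.sum_mul _ _ _).symm)
  have hmain : ∑ j, (ν j * (∑ i, lam i * (K i j)^2) - Real.log (γ j + 1))
      ≤ ∑ i : Fin p, (if (i : ℕ) < r then faH (lam i) else 0) := by
    refine le_trans (Finset.sum_le_sum (fun j _ => percol j)) ?_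
    rw [hswap2]; exact hfinal
  rw [Finset.sum_sub_distrib] at hmain
  rw [hlogdetinv, htr]
  linarith [hmain]
end

section
variable {p r : ℕ}

-- the value identity, scalar side
lemma fa_value_eq (hr : r ≤ p) (lam : Fin p → ℝ) :
    ∑ i : Fin p, (-(Real.log (1 + (if (i:ℕ) < r then max (lam i - 1) 0 else 0)))
        - (1 + (if (i:ℕ) < r then max (lam i - 1) 0 else 0))⁻¹ * lam i)
      = (∑ i : Fin p, (if (i : ℕ) < r then faH (lam i) else 0)) - ∑ i, lam i := by
  rw [← Finset.sum_sub_distrib]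
  refine Finset.sum_congr rfl (fun i _ => ?_)
  by_cases hi : (i : ℕ) < r
  · rw [if_pos hi, if_pos hi]
    rcases le_or_gt (lam i) 1 with hl | hl
    · rw [max_eq_right (by linarith), faH_of_le hl]
      norm_num
    · rw [max_eq_left (by linarith), faH_of_gt hl]
      have h1 : 1 + (lam i - 1) = lam i := by ring
      rw [h1]
      have h2 : (lam i)⁻¹ * lam i = 1 := inv_mul_cancel₀ (by linarith)
      rw [h2]
      ring
  · rw [if_neg hi, if_neg hi]
    norm_num

-- Bstar whitened gram matrix
lemma fa_bstar_gram (hr : r ≤ p) (ψ : Fin p → ℝ) (hψ : ∀ i, 0 < ψ i)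
    (U : Matrix (Fin p) (Fin p) ℝ) (lam : Fin p → ℝ)
    (Bstar : Matrix (Fin p) (Fin r) ℝ)
    (hBstar : ∀ (i : Fin p) (j : Fin r),
      Bstar i j = (Matrix.diagonal (fun k => Real.sqrt (ψ k)) * U) i (Fin.castLE hr j) *
        Real.sqrt (max (lam (Fin.castLE hr j) - 1) 0)) :
    (Matrix.diagonal (fun i => (Real.sqrt (ψ i))⁻¹) * Bstar)
      * (Matrix.diagonal (fun i => (Real.sqrt (ψ i))⁻¹) * Bstar)ᵀ
    = U * Matrix.diagonal (fun i : Fin p => if (i:ℕ) < r then max (lam i - 1) 0 else 0) * Uᵀ := by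
  have hsψ : ∀ i, Real.sqrt (ψ i) ≠ 0 := fun i => (Real.sqrt_pos.mpr (hψ i)).ne'
  have hC : ∀ (i : Fin p) (j : Fin r),
      (Matrix.diagonal (fun i => (Real.sqrt (ψ i))⁻¹) * Bstar) i j
        = U i (Fin.castLE hr j) * Real.sqrt (max (lam (Fin.castLE hr j) - 1) 0) := by
    intro i j
    rw [Matrix.diagonal_mul, hBstar i j, Matrix.diagonal_mul]
    rw [← mul_assoc, ← mul_assoc, inv_mul_cancel₀ (hsψ i), one_mul]
  ext i k
  rw [Matrix.mul_apply]
  have hlhs : ∑ j : Fin r, (Matrix.diagonal (fun i => (Real.sqrt (ψ i))⁻¹) * Bstar) i j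
        * ((Matrix.diagonal (fun i => (Real.sqrt (ψ i))⁻¹) * Bstar)ᵀ j k)
      = ∑ j : Fin r, U i (Fin.castLE hr j) * max (lam (Fin.castLE hr j) - 1) 0
          * U k (Fin.castLE hr j) := by
    refine Finset.sum_congr rfl (fun j _ => ?_)
    rw [Matrix.transpose_apply, hC i j, hC k j]
    have hss := Real.mul_self_sqrt (le_max_right (lam (Fin.castLE hr j) - 1) 0)
    calc U i (Fin.castLE hr j) * Real.sqrt (max (lam (Fin.castLE hr j) - 1) 0)
          * (U k (Fin.castLE hr j) * Real.sqrt (max (lam (Fin.castLE hr j) - 1) 0))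
        = U i (Fin.castLE hr j) * (Real.sqrt (max (lam (Fin.castLE hr j) - 1) 0)
            * Real.sqrt (max (lam (Fin.castLE hr j) - 1) 0)) * U k (Fin.castLE hr j) := by ring
      _ = U i (Fin.castLE hr j) * max (lam (Fin.castLE hr j) - 1) 0 * U k (Fin.castLE hr j) := by
          rw [hss]
  rw [hlhs, ← fa_sum_reindex hr (fun i' => U i i' * max (lam i' - 1) 0 * U k i')]
  rw [Matrix.mul_apply]
  refine (Finset.sum_congr rfl (fun i' _ => ?_)).symm
  rw [Matrix.transpose_apply, Matrix.mul_diagonal]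
  by_cases hi' : (i' : ℕ) < r
  · simp only [if_pos hi']; try ring
  · simp only [if_neg hi']; try ring
end

section
variable {p r : ℕ}

lemma fa_reduce (ψ : Fin p → ℝ) (hψ : ∀ i, 0 < ψ i) (S : Matrix (Fin p) (Fin p) ℝ)
    (B : Matrix (Fin p) (Fin r) ℝ) :
    Real.log ((B * Bᵀ + Matrix.diagonal ψ)⁻¹).det - ((B * Bᵀ + Matrix.diagonal ψ)⁻¹ * S).trace
    = 2 * Real.log (∏ i, (Real.sqrt (ψ i))⁻¹)
      + (Real.log (((Matrix.diagonal (fun i => (Real.sqrt (ψ i))⁻¹) * B)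
            * (Matrix.diagonal (fun i => (Real.sqrt (ψ i))⁻¹) * B)ᵀ + 1)⁻¹).det
        - (((Matrix.diagonal (fun i => (Real.sqrt (ψ i))⁻¹) * B)
            * (Matrix.diagonal (fun i => (Real.sqrt (ψ i))⁻¹) * B)ᵀ + 1)⁻¹
          * (Matrix.diagonal (fun i => (Real.sqrt (ψ i))⁻¹) * S
            * Matrix.diagonal (fun i => (Real.sqrt (ψ i))⁻¹))).trace) := by
  classical
  have hsψ : ∀ i, 0 < Real.sqrt (ψ i) := fun i => Real.sqrt_pos.mpr (hψ i)
  set Dh : Matrix (Fin p) (Fin p) ℝ := Matrix.diagonal (fun i => Real.sqrt (ψ i)) with hDh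
  set Dh' : Matrix (Fin p) (Fin p) ℝ := Matrix.diagonal (fun i => (Real.sqrt (ψ i))⁻¹) with hDh'
  set C : Matrix (Fin p) (Fin r) ℝ := Dh' * B with hCdef
  have hDD' : Dh * Dh' = 1 := by
    rw [hDh, hDh', Matrix.diagonal_mul_diagonal]
    have : (fun i => Real.sqrt (ψ i) * (Real.sqrt (ψ i))⁻¹) = fun _ => (1:ℝ) := by
      funext i; exact mul_inv_cancel₀ (hsψ i).ne'
    rw [this, Matrix.diagonal_one]
  have hΨ : Matrix.diagonal ψ = Dh * Dh := by
    rw [hDh, Matrix.diagonal_mul_diagonal]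
    have h : (fun i => Real.sqrt (ψ i) * Real.sqrt (ψ i)) = ψ :=
      funext fun i => Real.mul_self_sqrt (hψ i).le
    rw [h]
  have hB : B = Dh * C := by
    rw [hCdef, ← Matrix.mul_assoc, hDD', Matrix.one_mul]
  have hsplit : B * Bᵀ + Matrix.diagonal ψ = Dh * (C * Cᵀ + 1) * Dh := by
    rw [hB, hΨ]
    have hDhT : (Dh * C)ᵀ = Cᵀ * Dh := by
      rw [Matrix.transpose_mul, hDh, Matrix.diagonal_transpose]
    rw [hDhT]
    simp only [Matrix.mul_add, Matrix.add_mul, Matrix.mul_one, Matrix.one_mul,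
      Matrix.mul_assoc]
  have hpsd : (C * Cᵀ).PosSemidef := by
    have := Matrix.posSemidef_self_mul_conjTranspose C
    rwa [Matrix.conjTranspose_eq_transpose_of_trivial] at this
  have hPD : (C * Cᵀ + 1).PosDef := Matrix.PosDef.posSemidef_add hpsd Matrix.PosDef.one
  have hXdetpos : 0 < (C * Cᵀ + 1).det := hPD.det_pos
  have hXinv : (C * Cᵀ + 1) * (C * Cᵀ + 1)⁻¹ = 1 :=
    Matrix.mul_nonsing_inv _ (isUnit_iff_ne_zero.mpr hXdetpos.ne')
  have hdXi : ((C * Cᵀ + 1)⁻¹).det = ((C * Cᵀ + 1).det)⁻¹ := by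
    have h1 : (C * Cᵀ + 1).det * ((C * Cᵀ + 1)⁻¹).det = 1 := by
      rw [← Matrix.det_mul, hXinv, Matrix.det_one]
    field_simp at h1 ⊢
    linarith
  have hdXipos : 0 < ((C * Cᵀ + 1)⁻¹).det := by rw [hdXi]; exact inv_pos.mpr hXdetpos
  have hinvBB : (B * Bᵀ + Matrix.diagonal ψ)⁻¹ = Dh' * (C * Cᵀ + 1)⁻¹ * Dh' := by
    apply Matrix.inv_eq_right_inv
    rw [hsplit]
    have h1 : Dh * (C * Cᵀ + 1) * Dh * (Dh' * (C * Cᵀ + 1)⁻¹ * Dh')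
        = Dh * ((C * Cᵀ + 1) * ((Dh * Dh') * ((C * Cᵀ + 1)⁻¹ * Dh'))) := by
      simp only [Matrix.mul_assoc]
    rw [h1, hDD', Matrix.one_mul, ← Matrix.mul_assoc (C * Cᵀ + 1) _ _, hXinv,
      Matrix.one_mul, hDD']
  have hddpos : (0:ℝ) < ∏ i, (Real.sqrt (ψ i))⁻¹ := Finset.prod_pos (fun i _ => inv_pos.mpr (Real.sqrt_pos.mpr (hψ i)))
  have hdet : ((B * Bᵀ + Matrix.diagonal ψ)⁻¹).det
      = (∏ i, (Real.sqrt (ψ i))⁻¹) * ((C * Cᵀ + 1)⁻¹).det * (∏ i, (Real.sqrt (ψ i))⁻¹) := by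
    rw [hinvBB, Matrix.det_mul, Matrix.det_mul, hDh', Matrix.det_diagonal]
  have hlog : Real.log ((B * Bᵀ + Matrix.diagonal ψ)⁻¹).det
      = 2 * Real.log (∏ i, (Real.sqrt (ψ i))⁻¹) + Real.log ((C * Cᵀ + 1)⁻¹).det := by
    rw [hdet, Real.log_mul (by positivity) hddpos.ne', Real.log_mul hddpos.ne' hdXipos.ne']
    ring
  have htrace : ((B * Bᵀ + Matrix.diagonal ψ)⁻¹ * S).trace
      = ((C * Cᵀ + 1)⁻¹ * (Dh' * S * Dh')).trace := by
    rw [hinvBB]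
    have h1 : Dh' * (C * Cᵀ + 1)⁻¹ * Dh' * S = Dh' * ((C * Cᵀ + 1)⁻¹ * (Dh' * S)) := by
      simp only [Matrix.mul_assoc]
    rw [h1, Matrix.trace_mul_comm]
    simp only [Matrix.mul_assoc]
  rw [hlog, htrace]
  ring
end

/-- optimal factor-loading update in Gaussian factor analysis.
`Ψ = diagonal ψ` is positive definite diagonal, `S ⪰ 0`,
`Ψ^{-1/2} S Ψ^{-1/2} = U (diagonal lam) Uᵀ` with orthogonal `U` and
decreasingly sorted eigenvalues `lam`.  Then
`B* = Ψ^{1/2} U D^{1/2}` (here formed directly as a `p × r` matrix, taking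
`dᵢ = max (lamᵢ - 1) 0` on the first `r` coordinates) maximizes
`B ↦ log det ((BBᵀ + Ψ)⁻¹) - Tr ((BBᵀ + Ψ)⁻¹ S)` over all `p × r` matrices. -/
theorem fa_optimal_loading_update
    (p r : ℕ) (hr : r ≤ p)
    (ψ : Fin p → ℝ) (hψ : ∀ i, 0 < ψ i)
    (S : Matrix (Fin p) (Fin p) ℝ) (hS : S.PosSemidef)
    (U : Matrix (Fin p) (Fin p) ℝ) (hU : U * Uᵀ = 1 ∧ Uᵀ * U = 1)
    (lam : Fin p → ℝ) (hsort : ∀ i j : Fin p, i ≤ j → lam j ≤ lam i)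
    (hdecomp :
      Matrix.diagonal (fun i => (Real.sqrt (ψ i))⁻¹) * S *
          Matrix.diagonal (fun i => (Real.sqrt (ψ i))⁻¹) =
        U * Matrix.diagonal lam * Uᵀ)
    (Bstar : Matrix (Fin p) (Fin r) ℝ)
    (hBstar : ∀ (i : Fin p) (j : Fin r),
      Bstar i j = (Matrix.diagonal (fun k => Real.sqrt (ψ k)) * U) i (Fin.castLE hr j) *
        Real.sqrt (max (lam (Fin.castLE hr j) - 1) 0)) :
    ∀ B : Matrix (Fin p) (Fin r) ℝ,
      Real.log ((B * Bᵀ + Matrix.diagonal ψ)⁻¹).det -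
          ((B * Bᵀ + Matrix.diagonal ψ)⁻¹ * S).trace ≤
        Real.log ((Bstar * Bstarᵀ + Matrix.diagonal ψ)⁻¹).det -
          ((Bstar * Bstarᵀ + Matrix.diagonal ψ)⁻¹ * S).trace := by
  intro B
  classical
  rw [fa_reduce ψ hψ S B, fa_reduce ψ hψ S Bstar]
  rw [hdecomp]
  rw [fa_bstar_gram hr ψ hψ U lam Bstar hBstar]
  have he : ∀ i : Fin p, 0 ≤ (if (i:ℕ) < r then max (lam i - 1) 0 else 0) := by
    intro i; split
    · exact le_max_right _ _
    · exact le_rfl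
  rw [fa_value_formula U hU.1 hU.2 lam _ he]
  refine add_le_add le_rfl ?_
  refine le_trans (fa_core_bound hr U hU.1 hU.2 lam hsort _) ?_
  refine le_of_eq ?_
  rw [← fa_value_eq hr lam]
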